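/- Let d be a positive integer that is not a perfect square, and suppose (x₁, y₁) is the fundamental solution of x² − d·y² = −4 (i.e., a positive integer solution with minimal x₁). Then for every n ≥ 1 there exist positive integers x_n, y_n with x_n² − d·y_n² = −4 and x_n + y_n√d = (x₁ + y₁√d)²ⁿ⁻¹ / 2²ⁿ⁻² (as real numbers), and every positive integer solution of x² − d·y² = −4 arises this way for some n ≥ 1. -/

import Mathlib

private lemma zmod2_sq (a b c : ZMod 2) (h : a^2 - b*c^2 = -4) : a = b*c := by
  revert h; revert a b c; decide

private lemma zmod2_expr1 (D Y Y₁ : ZMod 2) :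
    D*Y*((D*Y₁)^2+2) - D*Y*(D*Y₁*Y₁) = 0 := by revert D Y Y₁; decide

private lemma zmod2_expr2 (D Y Y₁ : ZMod 2) :
    Y*((D*Y₁)^2+2) - D*Y*(D*Y₁*Y₁) = 0 := by revert D Y Y₁; decide

private lemma pell4_parity (d x y x₁ y₁ : ℤ) (h : x^2 - d*y^2 = -4) (h₁ : x₁^2 - d*y₁^2 = -4) :
    (2 ∣ x*(x₁^2+2) - d*y*(x₁*y₁)) ∧ (2 ∣ y*(x₁^2+2) - x*(x₁*y₁)) := by
  have e1 : ((x : ZMod 2)) = (d : ZMod 2) * (y : ZMod 2) := by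
    apply zmod2_sq
    have : ((x^2 - d*y^2 : ℤ) : ZMod 2) = ((-4:ℤ) : ZMod 2) := by rw [h]
    push_cast at this; exact this
  have e2 : ((x₁ : ZMod 2)) = (d : ZMod 2) * (y₁ : ZMod 2) := by
    apply zmod2_sq
    have : ((x₁^2 - d*y₁^2 : ℤ) : ZMod 2) = ((-4:ℤ) : ZMod 2) := by rw [h₁]
    push_cast at this; exact this
  constructor
  · have := (ZMod.intCast_zmod_eq_zero_iff_dvd (x*(x₁^2+2) - d*y*(x₁*y₁)) 2).mp
      (by push_cast; rw [e1, e2]; exact zmod2_expr1 _ _ _)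
    exact_mod_cast this
  · have := (ZMod.intCast_zmod_eq_zero_iff_dvd (y*(x₁^2+2) - x*(x₁*y₁)) 2).mp
      (by push_cast; rw [e1, e2]; exact zmod2_expr2 _ _ _)
    exact_mod_cast this

private lemma realid_down (s d x y x₁ y₁ a b : ℝ) (hs : s^2 = d)
    (hP : (x₁^2+2)^2 - d*(x₁*y₁)^2 = 4)
    (ha : x*(x₁^2+2) - d*y*(x₁*y₁) = 2*a) (hb : y*(x₁^2+2) - x*(x₁*y₁) = 2*b) :
    (a + b*s)*((x₁^2+2) + (x₁*y₁)*s) = 2*(x + y*s) := by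
  linear_combination (x+y*s)/2 * hP + (x₁*y₁)*(y*(x₁^2+2) - x*(x₁*y₁))/2 * hs
    - ((x₁^2+2) + (x₁*y₁)*s)/2 * ha - s*((x₁^2+2) + (x₁*y₁)*s)/2 * hb

private lemma realid_up (s d x y x₁ y₁ a b : ℝ) (hs : s^2 = d)
    (ha : x*(x₁^2+2) + d*y*(x₁*y₁) = 2*a) (hb : y*(x₁^2+2) + x*(x₁*y₁) = 2*b) :
    2*(a + b*s) = (x + y*s)*((x₁^2+2) + (x₁*y₁)*s) := by
  linear_combination -ha - s*hb - y*(x₁*y₁)*hs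

private lemma realE2 (s d x₁ y₁ : ℝ) (hs : s^2 = d) (h₁ : x₁^2 - d*y₁^2 = -4) :
    (x₁ + y₁*s)^2 = 2*((x₁^2+2) + (x₁*y₁)*s) := by
  linear_combination y₁^2*hs - h₁

set_option maxHeartbeats 2000000 in
/-- Let `d` be a positive nonsquare integer and `(x₁, y₁)` the fundamental solution of
`x² − dy² = −4` (a positive integer solution with minimal `x₁`). Then for every `n ≥ 1`
there is a positive integer solution `(xₙ, yₙ)` with
`xₙ + yₙ√d = (x₁ + y₁√d)²ⁿ⁻¹ / 2²ⁿ⁻²`, and every positive integer solution arises this way. -/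
theorem pell_neg_four_all_solutions (d : ℤ) (hd : 0 < d) (hds : ¬ IsSquare d)
    (x₁ y₁ : ℤ) (hx₁ : 0 < x₁) (hy₁ : 0 < y₁) (h₁ : x₁ ^ 2 - d * y₁ ^ 2 = -4)
    (hmin : ∀ x y : ℤ, 0 < x → 0 < y → x ^ 2 - d * y ^ 2 = -4 → x₁ ≤ x) :
    (∀ n : ℕ, 1 ≤ n → ∃ x y : ℤ, 0 < x ∧ 0 < y ∧ x ^ 2 - d * y ^ 2 = -4 ∧
      (x : ℝ) + (y : ℝ) * Real.sqrt d =
        ((x₁ : ℝ) + (y₁ : ℝ) * Real.sqrt d) ^ (2 * n - 1) / 2 ^ (2 * n - 2)) ∧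
    (∀ x y : ℤ, 0 < x → 0 < y → x ^ 2 - d * y ^ 2 = -4 →
      ∃ n : ℕ, 1 ≤ n ∧ (x : ℝ) + (y : ℝ) * Real.sqrt d =
        ((x₁ : ℝ) + (y₁ : ℝ) * Real.sqrt d) ^ (2 * n - 1) / 2 ^ (2 * n - 2)) := by
  have hd1 : d ≠ 1 := by rintro rfl; exact hds ⟨1, rfl⟩
  have hd2 : (2:ℤ) ≤ d := by omega
  obtain ⟨s, hsdef⟩ : ∃ s : ℝ, Real.sqrt (d:ℝ) = s := ⟨_, rfl⟩
  rw [hsdef]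
  have hs0 : 0 ≤ s := hsdef ▸ Real.sqrt_nonneg _
  have hs : s^2 = (d:ℝ) := by rw [← hsdef]; exact Real.sq_sqrt (by exact_mod_cast hd.le)
  have hd2R : (2:ℝ) ≤ (d:ℝ) := by exact_mod_cast hd2
  have hs1 : 1 < s := by nlinarith
  have h₁R : (x₁:ℝ)^2 - (d:ℝ)*(y₁:ℝ)^2 = -4 := by exact_mod_cast h₁
  have hP : (x₁^2+2)^2 - d*(x₁*y₁)^2 = 4 := by linear_combination x₁^2 * h₁
  have hPR : ((x₁:ℝ)^2+2)^2 - (d:ℝ)*((x₁:ℝ)*(y₁:ℝ))^2 = 4 := by exact_mod_cast hP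
  have hx₁R : (1:ℝ) ≤ (x₁:ℝ) := by exact_mod_cast hx₁
  have hy₁R : (1:ℝ) ≤ (y₁:ℝ) := by exact_mod_cast hy₁
  have hE : (2:ℝ) < (x₁:ℝ) + (y₁:ℝ)*s := by nlinarith
  have hE0 : (0:ℝ) < (x₁:ℝ) + (y₁:ℝ)*s := by linarith
  have hE2R : ((x₁:ℝ) + (y₁:ℝ)*s)^2 = 2*(((x₁:ℝ)^2+2) + ((x₁:ℝ)*(y₁:ℝ))*s) :=
    realE2 s d x₁ y₁ hs h₁R
  -- step up: multiply a solution by ε²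
  have step_up : ∀ x y : ℤ, 0 < x → 0 < y → x^2 - d*y^2 = -4 →
      ∃ a b : ℤ, 0 < a ∧ 0 < b ∧ a^2 - d*b^2 = -4 ∧
        (a:ℝ) + (b:ℝ)*s = ((x:ℝ) + (y:ℝ)*s) * (((x₁:ℝ) + (y₁:ℝ)*s)^2/4) := by
    intro x y hx hy h
    obtain ⟨⟨a₀, ha₀⟩, ⟨b₀, hb₀⟩⟩ := pell4_parity d x y x₁ y₁ h h₁
    refine ⟨a₀ + d*y*(x₁*y₁), b₀ + x*(x₁*y₁), ?_, ?_, ?_, ?_⟩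
    · linarith [ha₀, mul_pos hx (show (0:ℤ) < x₁^2+2 by positivity),
        mul_pos (mul_pos hd hy) (mul_pos hx₁ hy₁)]
    · linarith [hb₀, mul_pos hy (show (0:ℤ) < x₁^2+2 by positivity),
        mul_pos hx (mul_pos hx₁ hy₁)]
    · have h16 : (2*(a₀ + d*y*(x₁*y₁)))^2 - d*(2*(b₀ + x*(x₁*y₁)))^2 = -16 := by
        rw [show 2*(a₀ + d*y*(x₁*y₁)) = x*(x₁^2+2) + d*y*(x₁*y₁) by linarith,
            show 2*(b₀ + x*(x₁*y₁)) = y*(x₁^2+2) + x*(x₁*y₁) by linarith]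
        linear_combination ((x₁^2+2)^2 - d*(x₁*y₁)^2) * h + (-4*x₁^2) * h₁
      linarith [h16]
    · have haZ : x*(x₁^2+2) + d*y*(x₁*y₁) = 2*(a₀ + d*y*(x₁*y₁)) := by linarith
      have hbZ : y*(x₁^2+2) + x*(x₁*y₁) = 2*(b₀ + x*(x₁*y₁)) := by linarith
      have haR : (x:ℝ)*((x₁:ℝ)^2+2) + (d:ℝ)*(y:ℝ)*((x₁:ℝ)*(y₁:ℝ)) = 2*((a₀ + d*y*(x₁*y₁) : ℤ):ℝ) := by
        exact_mod_cast haZ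
      have hbR : (y:ℝ)*((x₁:ℝ)^2+2) + (x:ℝ)*((x₁:ℝ)*(y₁:ℝ)) = 2*((b₀ + x*(x₁*y₁) : ℤ):ℝ) := by
        exact_mod_cast hbZ
      have hup := realid_up s d x y x₁ y₁ _ _ hs haR hbR
      linear_combination hup/2 - (((x:ℝ)+(y:ℝ)*s)/4)*hE2R
  -- descend: divide a non-minimal solution by ε²
  have descend : ∀ x y : ℤ, 0 < x → 0 < y → x^2 - d*y^2 = -4 → x₁ < x →
      ∃ a b : ℤ, 0 < a ∧ 0 < b ∧ a^2 - d*b^2 = -4 ∧ a < x ∧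
        ((a:ℝ) + (b:ℝ)*s) * ((x₁:ℝ) + (y₁:ℝ)*s)^2 = 4*((x:ℝ) + (y:ℝ)*s) := by
    intro x y hx hy h hlt
    obtain ⟨⟨a, ha⟩, ⟨b, hb⟩⟩ := pell4_parity d x y x₁ y₁ h h₁
    have hab : a^2 - d*b^2 = -4 := by
      have h16 : (2*a)^2 - d*(2*b)^2 = -16 := by
        rw [← ha, ← hb]
        linear_combination ((x₁^2+2)^2 - d*(x₁*y₁)^2) * h + (-4*x₁^2) * h₁
      linarith [h16]
    -- b > 0
    have keyb : (y*(x₁^2+2))^2 - (x*(x₁*y₁))^2 = 4*y^2 + 4*x₁^2*y₁^2 := by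
      linear_combination (-(x₁^2*y₁^2)) * h + y^2*x₁^2 * h₁
    have hsum : 0 < y*(x₁^2+2) + x*(x₁*y₁) := by
      linarith only [mul_pos hy (show (0:ℤ) < x₁^2+2 by positivity),
        mul_pos hx (mul_pos hx₁ hy₁)]
    have hprod : (2*b) * (y*(x₁^2+2) + x*(x₁*y₁)) = 4*y^2 + 4*x₁^2*y₁^2 := by
      linear_combination keyb - (y*(x₁^2+2) + x*(x₁*y₁)) * hb
    have hK : (0:ℤ) < 4*y^2 + 4*x₁^2*y₁^2 := by positivity
    have hb0 : 0 < b := by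
      by_contra hcon
      push_neg at hcon
      have : (2*b) * (y*(x₁^2+2) + x*(x₁*y₁)) ≤ 0 :=
        mul_nonpos_iff.mpr (Or.inr ⟨by linarith only [hcon], hsum.le⟩)
      linarith only [this, hprod, hK]
    -- real identity
    have haR : (x:ℝ)*((x₁:ℝ)^2+2) - (d:ℝ)*(y:ℝ)*((x₁:ℝ)*(y₁:ℝ)) = 2*(a:ℝ) := by
      exact_mod_cast ha
    have hbR : (y:ℝ)*((x₁:ℝ)^2+2) - (x:ℝ)*((x₁:ℝ)*(y₁:ℝ)) = 2*(b:ℝ) := by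
      exact_mod_cast hb
    have hdown := realid_down s d x y x₁ y₁ a b hs hPR haR hbR
    have hfin : ((a:ℝ) + (b:ℝ)*s) * ((x₁:ℝ) + (y₁:ℝ)*s)^2 = 4*((x:ℝ) + (y:ℝ)*s) := by
      rw [hE2R]; linear_combination 2*hdown
    have hxR : (1:ℝ) ≤ (x:ℝ) := by exact_mod_cast hx
    have hyR : (1:ℝ) ≤ (y:ℝ) := by exact_mod_cast hy
    have hApos : (0:ℝ) < (x:ℝ) + (y:ℝ)*s := by
      have : (0:ℝ) ≤ (y:ℝ)*s := mul_nonneg (by linarith) hs0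
      linarith
    have hEp2 : (0:ℝ) < ((x₁:ℝ) + (y₁:ℝ)*s)^2 := pow_pos hE0 2
    have hA'pos : (0:ℝ) < (a:ℝ) + (b:ℝ)*s := by
      have h4A : (0:ℝ) < ((a:ℝ) + (b:ℝ)*s) * ((x₁:ℝ) + (y₁:ℝ)*s)^2 := by
        rw [hfin]; linarith
      rcases mul_pos_iff.mp h4A with ⟨h', _⟩ | ⟨_, h'⟩
      · exact h'
      · linarith
    have habR : (a:ℝ)^2 - (d:ℝ)*(b:ℝ)^2 = -4 := by exact_mod_cast hab
    -- y > y₁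
    have hyy : y₁ < y := by
      have h9 : d*y^2 - d*y₁^2 = x^2 - x₁^2 := by linear_combination h₁ - h
      have h8 : x₁^2 < x^2 := pow_lt_pow_left₀ hlt hx₁.le (by norm_num)
      have h7 : y₁^2 < y^2 := by
        have h10 : 0 < d*(y^2 - y₁^2) := by linarith only [h9, h8]
        rcases mul_pos_iff.mp h10 with ⟨_, h'⟩ | ⟨h', _⟩
        · linarith only [h']
        · linarith only [h', hd]
      by_contra hcon
      push_neg at hcon
      exact absurd (pow_le_pow_left₀ hy.le hcon 2) (not_le.mpr h7)
    have hAE : ((x₁:ℝ) + (y₁:ℝ)*s) < (x:ℝ) + (y:ℝ)*s := by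
      have c1 : (x₁:ℝ) < (x:ℝ) := by exact_mod_cast hlt
      have c2 : (y₁:ℝ) ≤ (y:ℝ) := by exact_mod_cast hyy.le
      linarith only [c1, mul_le_mul_of_nonneg_right c2 hs0]
    rcases lt_trichotomy a 0 with hneg | hzero | hpos
    · -- a < 0 : contradiction with minimality
      exfalso
      have hca : (-a)^2 - d*b^2 = -4 := by linear_combination hab
      have hxa : x₁ ≤ -a := hmin (-a) b (by omega) hb0 hca
      have h8 : x₁^2 ≤ a^2 := by
        have := pow_le_pow_left₀ hx₁.le hxa 2
        linarith only [this]
      have h9 : d*b^2 - d*y₁^2 = a^2 - x₁^2 := by linear_combination h₁ - hca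
      have h7 : y₁^2 ≤ b^2 := by
        by_contra hcon
        push_neg at hcon
        have := mul_pos hd (show (0:ℤ) < y₁^2 - b^2 by linarith only [hcon])
        linarith only [this, h9, h8]
      have hyb : y₁ ≤ b := by
        by_contra hcon
        push_neg at hcon
        exact absurd (pow_lt_pow_left₀ hcon hb0.le (by norm_num)) (not_lt.mpr h7)
      have hBE : ((x₁:ℝ) + (y₁:ℝ)*s) ≤ (-(a:ℝ)) + (b:ℝ)*s := by
        have c1 : (x₁:ℝ) ≤ -(a:ℝ) := by exact_mod_cast hxa
        have c2 : (y₁:ℝ) ≤ (b:ℝ) := by exact_mod_cast hyb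
        linarith only [c1, mul_le_mul_of_nonneg_right c2 hs0]
      have hAB : ((a:ℝ) + (b:ℝ)*s) * (-(a:ℝ) + (b:ℝ)*s) = 4 := by
        linear_combination (b:ℝ)^2*hs - habR
      have t1 : ((a:ℝ) + (b:ℝ)*s) * ((x₁:ℝ) + (y₁:ℝ)*s) ≤ 4 := by
        have := mul_le_mul_of_nonneg_left hBE hA'pos.le
        linarith only [this, hAB]
      have t2 : ((a:ℝ) + (b:ℝ)*s) * ((x₁:ℝ) + (y₁:ℝ)*s) * ((x₁:ℝ) + (y₁:ℝ)*s) > 4*((x₁:ℝ) + (y₁:ℝ)*s) := by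
        have : 4*((x₁:ℝ) + (y₁:ℝ)*s) < 4*((x:ℝ) + (y:ℝ)*s) := by linarith only [hAE]
        nlinarith [hfin]
      have t3 := mul_le_mul_of_nonneg_right t1 hE0.le
      linarith only [t2, t3]
    · -- a = 0 : impossible since d is not a square
      exfalso
      subst hzero
      have hdb : d * b^2 = 4 := by linear_combination -hab
      rcases (by omega : b = 1 ∨ 2 ≤ b) with rfl | hb2
      · have : d = 4 := by linarith
        exact hds ⟨2, by omega⟩
      · have hb4 : (4:ℤ) ≤ b^2 := by
          have := pow_le_pow_left₀ (by norm_num : (0:ℤ) ≤ 2) hb2 2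
          linarith only [this]
        have := mul_le_mul hd2 hb4 (by norm_num) (by linarith only [hd2])
        linarith only [this, hdb]
    · -- a > 0 : the descent step
      have hA'ltA : (a:ℝ) + (b:ℝ)*s < (x:ℝ) + (y:ℝ)*s := by
        have hE4 : (4:ℝ) < ((x₁:ℝ) + (y₁:ℝ)*s)^2 := by
          have := pow_lt_pow_left₀ hE (by norm_num : (0:ℝ) ≤ 2) (by norm_num : 2 ≠ 0)
          norm_num at this
          linarith only [this]
        have h12 := mul_lt_mul_of_pos_left hE4 hApos
        have h11 : ((a:ℝ) + (b:ℝ)*s) * ((x₁:ℝ) + (y₁:ℝ)*s)^2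
            < ((x:ℝ) + (y:ℝ)*s) * ((x₁:ℝ) + (y₁:ℝ)*s)^2 := by
          linarith only [hfin, h12]
        exact lt_of_mul_lt_mul_right h11 hEp2.le
      have huA : ((x:ℝ) + (y:ℝ)*s) * ((x:ℝ) - (y:ℝ)*s) = -4 := by
        have hR : (x:ℝ)^2 - (d:ℝ)*(y:ℝ)^2 = -4 := by exact_mod_cast h
        linear_combination -((y:ℝ)^2)*hs + hR
      have huA' : ((a:ℝ) + (b:ℝ)*s) * ((a:ℝ) - (b:ℝ)*s) = -4 := by
        linear_combination -((b:ℝ)^2)*hs + habR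
      have hAA' : (0:ℝ) < ((x:ℝ) + (y:ℝ)*s) * ((a:ℝ) + (b:ℝ)*s) := mul_pos hApos hA'pos
      have m3 : (0:ℝ) < (((x:ℝ)+(y:ℝ)*s) - ((a:ℝ)+(b:ℝ)*s)) *
          (((x:ℝ)+(y:ℝ)*s)*((a:ℝ)+(b:ℝ)*s) + 4) :=
        mul_pos (sub_pos.mpr hA'ltA) (by linarith only [hAA'])
      have m4 : (((x:ℝ)+(y:ℝ)*s) - ((a:ℝ)+(b:ℝ)*s)) *
          (((x:ℝ)+(y:ℝ)*s)*((a:ℝ)+(b:ℝ)*s) + 4)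
          = ((x:ℝ)+(y:ℝ)*s)*((a:ℝ)+(b:ℝ)*s)*(2*(x:ℝ) - 2*(a:ℝ)) := by
        linear_combination (-((a:ℝ)+(b:ℝ)*s))*huA + ((x:ℝ)+(y:ℝ)*s)*huA'
      have haxR : (a:ℝ) < (x:ℝ) := by
        rw [m4] at m3
        rcases mul_pos_iff.mp m3 with ⟨_, h'⟩ | ⟨h', _⟩
        · linarith only [h']
        · linarith only [h', hAA']
      exact ⟨a, b, hpos, hb0, hab, by exact_mod_cast haxR, hfin⟩
  -- part 1: existence for each m (exponent 2m+1 over 2^(2m))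
  have part1 : ∀ m : ℕ, ∃ x y : ℤ, 0 < x ∧ 0 < y ∧ x^2 - d*y^2 = -4 ∧
      (x:ℝ) + (y:ℝ)*s = ((x₁:ℝ) + (y₁:ℝ)*s)^(2*m+1)/2^(2*m) := by
    intro m
    induction m with
    | zero => exact ⟨x₁, y₁, hx₁, hy₁, h₁, by norm_num⟩
    | succ m ih =>
      obtain ⟨x, y, hx, hy, h, hm⟩ := ih
      obtain ⟨a, b, ha0, hb0, hab, hstep⟩ := step_up x y hx hy h
      refine ⟨a, b, ha0, hb0, hab, ?_⟩
      calc (a:ℝ) + (b:ℝ)*s = ((x:ℝ) + (y:ℝ)*s) * (((x₁:ℝ) + (y₁:ℝ)*s)^2/4) := hstep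
        _ = (((x₁:ℝ) + (y₁:ℝ)*s)^(2*m+1)/2^(2*m)) * (((x₁:ℝ) + (y₁:ℝ)*s)^2/4) := by rw [hm]
        _ = ((x₁:ℝ) + (y₁:ℝ)*s)^(2*(m+1)+1)/2^(2*(m+1)) := by
            rw [show 2*(m+1)+1 = (2*m+1)+2 by omega, show 2*(m+1) = (2*m)+2 by omega,
              pow_add, pow_add]
            ring
  -- part 2: every solution arises this way
  have part2 : ∀ N : ℕ, ∀ x y : ℤ, 0 < x → 0 < y → x^2 - d*y^2 = -4 → x ≤ N →
      ∃ m : ℕ, (x:ℝ) + (y:ℝ)*s = ((x₁:ℝ) + (y₁:ℝ)*s)^(2*m+1)/2^(2*m) := by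
    intro N
    induction N with
    | zero => intro x y hx _ _ hxN; omega
    | succ N ih =>
      intro x y hx hy h hxN
      rcases eq_or_lt_of_le (hmin x y hx hy h) with heq | hlt
      · subst heq
        have h9 : d*((y-y₁)*(y+y₁)) = 0 := by linear_combination h₁ - h
        have hyy : y = y₁ := by
          rcases mul_eq_zero.mp h9 with h' | h'
          · omega
          · rcases mul_eq_zero.mp h' with h'' | h'' <;> omega
        subst hyy
        exact ⟨0, by norm_num⟩
      · obtain ⟨a, b, ha0, hb0, hab, haltx, hfin⟩ := descend x y hx hy h hlt
        obtain ⟨m, hm⟩ := ih a b ha0 hb0 hab (by omega)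
        refine ⟨m+1, ?_⟩
        calc (x:ℝ) + (y:ℝ)*s = ((a:ℝ) + (b:ℝ)*s) * (((x₁:ℝ) + (y₁:ℝ)*s)^2)/4 := by
              linarith [hfin]
          _ = (((x₁:ℝ) + (y₁:ℝ)*s)^(2*m+1)/2^(2*m)) * (((x₁:ℝ) + (y₁:ℝ)*s)^2)/4 := by rw [hm]
          _ = ((x₁:ℝ) + (y₁:ℝ)*s)^(2*(m+1)+1)/2^(2*(m+1)) := by
              rw [show 2*(m+1)+1 = (2*m+1)+2 by omega, show 2*(m+1) = (2*m)+2 by omega,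
                pow_add, pow_add]
              ring
  constructor
  · intro n hn
    obtain ⟨x, y, hx, hy, h, hm⟩ := part1 (n-1)
    refine ⟨x, y, hx, hy, h, ?_⟩
    rw [show 2*n-1 = 2*(n-1)+1 by omega, show 2*n-2 = 2*(n-1) by omega]
    exact hm
  · intro x y hx hy h
    obtain ⟨m, hm⟩ := part2 x.toNat x y hx hy h (by omega)
    refine ⟨m+1, by omega, ?_⟩
    rw [show 2*(m+1)-1 = 2*m+1 by omega, show 2*(m+1)-2 = 2*m by omega]
    exact hm
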